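/- arXiv:2601.11358 — 3 statements merged into one kernel-verified Lean document; each statement's English description precedes it below -/
import Mathlib

section
/- If l ≤ u are reals, v a real, and p ∈ [0, 1/2], and η > 0, then (u - v)/(u - l) > p implies ((u + η) - v)/((u + η) - (l - η)) > p, provided u > v and u - l > 0. -/
theorem trigger_sound_widening
    (l u v η p : ℝ) (hlu : l < u) (hvu : v < u)
    (hp0 : 0 ≤ p) (hp : p ≤ 1/2) (hη : 0 < η) :
    (u - v) / (u - l) > p → ((u + η) - v) / ((u + η) - (l - η)) > p := by
  intro h
  have hd : (0:ℝ) < u - l := by linarith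
  have hd2 : (0:ℝ) < (u + η) - (l - η) := by linarith
  rw [gt_iff_lt, lt_div_iff₀ hd] at h
  rw [gt_iff_lt, lt_div_iff₀ hd2]
  nlinarith
end

section
/- If two generators (columns) g_i and g_j of a zonotope's generator matrix are colinear, say g_j = λ·g_i for some real λ, then the zonotope is unchanged when the two columns are replaced by the single column (1 + |λ|)·g_i: Z(c, G) = Z(c, G'), where G' has the merged generator in place of g_i and omits g_j. -/
def zonotope {d k : Type*} [Fintype k] (c : d → ℝ) (G : Matrix d k ℝ) : Set (d → ℝ) :=
  {x | ∃ ε : k → ℝ, (∀ j, ε j ∈ Set.Icc (-1 : ℝ) 1) ∧ x = c + G.mulVec ε}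

private lemma sum_subtype_ne {k : ℕ} (j : Fin k) (f : Fin k → ℝ) :
    (∑ m : {m : Fin k // m ≠ j}, f m) = ∑ m ∈ Finset.univ.erase j, f m :=
  (Finset.sum_subtype (Finset.univ.erase j) (by simp) f).symm

private lemma mul_sign (lam : ℝ) : lam * Real.sign lam = |lam| := by
  rcases lt_trichotomy lam 0 with h | h | h
  · rw [Real.sign_of_neg h, abs_of_neg h]; ring
  · simp [h]
  · rw [Real.sign_of_pos h, abs_of_pos h]; ring

theorem zonotope_colinear_merge {d k : ℕ} (c : Fin d → ℝ)
    (G : Matrix (Fin d) (Fin k) ℝ) (i j : Fin k) (hij : i ≠ j) (lam : ℝ)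
    (hcol : ∀ r, G r j = lam * G r i) :
    zonotope c G
      = zonotope c (fun r (m : {m : Fin k // m ≠ j}) =>
          if (m : Fin k) = i then (1 + |lam|) * G r i else G r m) := by
  have hpos : (0:ℝ) < 1 + |lam| := by positivity
  have hij' : i ∈ Finset.univ.erase j := by simp [hij]
  ext x
  constructor
  · rintro ⟨ε, hε, rfl⟩
    refine ⟨fun m => if (m : Fin k) = i then (ε i + lam * ε j) / (1 + |lam|) else ε m, ?_, ?_⟩
    · intro m
      by_cases hm : (m : Fin k) = i
      · simp only [hm, if_pos]
        have habs : |ε i + lam * ε j| ≤ 1 + |lam| := by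
          calc |ε i + lam * ε j| ≤ |ε i| + |lam| * |ε j| := by
                rw [← abs_mul]; exact abs_add_le _ _
            _ ≤ 1 + |lam| * 1 := by
                gcongr
                · exact abs_le.mpr ⟨(hε i).1, (hε i).2⟩
                · exact abs_le.mpr ⟨(hε j).1, (hε j).2⟩
            _ = 1 + |lam| := by ring
        rw [Set.mem_Icc]
        constructor
        · rw [le_div_iff₀ hpos]; nlinarith [abs_le.mp habs]
        · rw [div_le_iff₀ hpos]; nlinarith [abs_le.mp habs]
      · simpa only [hm, if_neg, if_false] using hε m
    · funext r
      simp only [Pi.add_apply, Matrix.mulVec, dotProduct]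
      congr 1
      rw [show (∑ m : {m : Fin k // m ≠ j},
            (if (m : Fin k) = i then (1 + |lam|) * G r i else G r (m : Fin k)) *
              (if (m : Fin k) = i then (ε i + lam * ε j) / (1 + |lam|) else ε (m : Fin k)))
          = ∑ m ∈ Finset.univ.erase j,
            (if m = i then (1 + |lam|) * G r i else G r m) *
              (if m = i then (ε i + lam * ε j) / (1 + |lam|) else ε m)
          from sum_subtype_ne j (fun m =>
            (if m = i then (1 + |lam|) * G r i else G r m) *
              (if m = i then (ε i + lam * ε j) / (1 + |lam|) else ε m))]
      rw [← Finset.add_sum_erase _ _ hij',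
        ← Finset.add_sum_erase _ (fun m => G r m * ε m) (Finset.mem_univ j),
        ← Finset.add_sum_erase _ (fun m => G r m * ε m) hij']
      have h1 : (∑ m ∈ (Finset.univ.erase j).erase i,
          (if m = i then (1 + |lam|) * G r i else G r m) *
            (if m = i then (ε i + lam * ε j) / (1 + |lam|) else ε m))
          = ∑ m ∈ (Finset.univ.erase j).erase i, G r m * ε m := by
        refine Finset.sum_congr rfl fun m hm => ?_
        have : m ≠ i := (Finset.mem_erase.mp hm).1
        simp [this]
      rw [h1]
      simp only [if_pos rfl, ↓reduceIte]
      rw [hcol r]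
      field_simp
      ring
  · rintro ⟨ε, hε, rfl⟩
    refine ⟨fun m => if h : m = j then Real.sign lam * ε ⟨i, hij⟩ else ε ⟨m, h⟩, ?_, ?_⟩
    · intro m
      by_cases hm : m = j
      · simp only [hm, dif_pos]
        have h1 : |Real.sign lam * ε ⟨i, hij⟩| ≤ 1 := by
          rw [abs_mul]
          calc |Real.sign lam| * |ε ⟨i, hij⟩| ≤ 1 * 1 := by
                gcongr
                · rcases Real.sign_apply_eq lam with h | h | h <;> simp [h]
                · exact abs_le.mpr ⟨(hε ⟨i, hij⟩).1, (hε ⟨i, hij⟩).2⟩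
            _ = 1 := by ring
        exact abs_le.mp h1
      · simpa only [hm, dif_neg, ↓reduceDIte] using hε ⟨m, hm⟩
    · funext r
      simp only [Pi.add_apply, Matrix.mulVec, dotProduct]
      symm
      congr 1
      have hε' : ∀ m : {m : Fin k // m ≠ j},
          (if (m : Fin k) = i then (1 + |lam|) * G r i else G r (m : Fin k)) * ε m
          = (fun n : Fin k => if h : n = j then 0
              else (if n = i then (1 + |lam|) * G r i else G r n) * ε ⟨n, h⟩) (m : Fin k) := by
        rintro ⟨m, hm⟩
        simp [hm]
      calc (∑ m : Fin k, G r m *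
              (if h : m = j then Real.sign lam * ε ⟨i, hij⟩ else ε ⟨m, h⟩))
          = G r j * (Real.sign lam * ε ⟨i, hij⟩) + (G r i * ε ⟨i, hij⟩
            + ∑ m ∈ (Finset.univ.erase j).erase i, G r m *
                (if h : m = j then Real.sign lam * ε ⟨i, hij⟩ else ε ⟨m, h⟩)) := by
            rw [← Finset.add_sum_erase _ _ (Finset.mem_univ j),
              ← Finset.add_sum_erase _ _ hij']
            simp [hij]
        _ = (1 + |lam|) * G r i * ε ⟨i, hij⟩
            + (0 + ∑ m ∈ (Finset.univ.erase j).erase i,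
                (if h : m = j then 0
                  else (if m = i then (1 + |lam|) * G r i else G r m) * ε ⟨m, h⟩)) := by
            rw [zero_add]
            rw [hcol r, ← add_assoc]
            congr 1
            · linear_combination G r i * ε ⟨i, hij⟩ * mul_sign lam
            · refine Finset.sum_congr rfl fun m hm => ?_
              have h2 : m ≠ i := (Finset.mem_erase.mp hm).1
              have h3 : m ≠ j := (Finset.mem_erase.mp (Finset.mem_erase.mp hm).2).1
              simp [h2, h3]
        _ = ∑ m ∈ Finset.univ.erase j,
                (if h : m = j then 0
                  else (if m = i then (1 + |lam|) * G r i else G r m) * ε ⟨m, h⟩) := by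
            rw [← Finset.add_sum_erase _ _ hij']
            simp [hij]
        _ = ∑ m : {m : Fin k // m ≠ j},
              (if (m : Fin k) = i then (1 + |lam|) * G r i else G r (m : Fin k)) * ε m := by
            rw [← sum_subtype_ne j]
            exact (Finset.sum_congr rfl fun m _ => hε' m).symm
end

section
/- Let [l, u] ⊆ [l', u'] be nested closed real intervals with the same midpoint, l < u, and v a real with l ≤ v ≤ u. Then for p in [0, 1/2], (u − v)/(u − l) > p implies (u' − v)/(u' − l') > p; and for p in [1/2, 1], (u' − v)/(u' − l') > p implies (u − v)/(u − l) > p. -/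
theorem nested_concentric_interval_trigger (l u l' u' v p : ℝ)
    (h1 : l' ≤ l) (h2 : l < u) (h3 : u ≤ u')
    (hmid : l + u = l' + u') (hvl : l ≤ v) (hvu : v ≤ u) :
    (0 ≤ p → p ≤ 1/2 → ((u - v) / (u - l) > p → (u' - v) / (u' - l') > p)) ∧
    (1/2 ≤ p → p ≤ 1 → ((u' - v) / (u' - l') > p → (u - v) / (u - l) > p)) := by
  have hd : (0:ℝ) < u - l := by linarith
  have hD : (0:ℝ) < u' - l' := by linarith
  constructor
  · intro hp0 hp h
    rw [gt_iff_lt, lt_div_iff₀ hd] at h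
    rw [gt_iff_lt, lt_div_iff₀ hD]
    nlinarith
  · intro hp0 hp h
    rw [gt_iff_lt, lt_div_iff₀ hD] at h
    rw [gt_iff_lt, lt_div_iff₀ hd]
    nlinarith
end
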